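/- (Witness decomposition.) For every *-term P, the evaluation tree se(P) can be decomposed as X[△↦Y] with X ∈ T_{A,△} and Y ∈ T_A, such that X contains the leaf △ and Y = se(R) where R is the rightmost ℓ-term of P (X may equal △). -/
import Mathlib


/-- Evaluation trees over a set `A` of atoms, with leaves `T` and `F`. -/
inductive ETree (A : Type) : Type
  | leafT : ETree A
  | leafF : ETree A
  | node : ETree A → A → ETree A → ETree A

namespace ETree

/-- Leaf replacement `X[T↦Y, F↦Z]`. -/
def repl {A : Type} : ETree A → ETree A → ETree A → ETree A
  | leafT, y, _ => y
  | leafF, _, z => z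
  | node l a r, y, z => node (repl l y z) a (repl r y z)

end ETree

namespace ETree

/-- The tree contains the leaf `T`. -/
def hasT {A : Type} : ETree A → Prop
  | leafT => True
  | leafF => False
  | node l _ r => hasT l ∨ hasT r

/-- The tree contains the leaf `F`. -/
def hasF {A : Type} : ETree A → Prop
  | leafT => False
  | leafF => True
  | node l _ r => hasF l ∨ hasF r

end ETree

/-- Closed sequential propositional statements over `A`:
`P ::= a | T | F | ¬P | P ∧❛ P | P ∨❛ P`. -/
inductive STerm (A : Type) : Type
  | atom : A → STerm A
  | tt : STerm A
  | ff : STerm A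
  | neg : STerm A → STerm A
  | and : STerm A → STerm A → STerm A
  | or : STerm A → STerm A → STerm A

/-- The short-circuit evaluation function `se : S_A → T_A`. -/
def se {A : Type} : STerm A → ETree A
  | .tt => .leafT
  | .ff => .leafF
  | .atom a => .node .leafT a .leafF
  | .neg P => (se P).repl .leafF .leafT
  | .and P Q => (se P).repl (se Q) .leafF
  | .or P Q => (se P).repl .leafT (se Q)

/-- T-terms: `P^T ::= T | (a ∧❛ P^T) ∨❛ P^T`. -/
inductive IsTTerm {A : Type} : STerm A → Prop
  | tt : IsTTerm .tt
  | node (a : A) {P Q} : IsTTerm P → IsTTerm Q → IsTTerm (.or (.and (.atom a) P) Q)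

/-- F-terms: `P^F ::= F | (a ∨❛ P^F) ∧❛ P^F`. -/
inductive IsFTerm {A : Type} : STerm A → Prop
  | ff : IsFTerm .ff
  | node (a : A) {P Q} : IsFTerm P → IsFTerm Q → IsFTerm (.and (.or (.atom a) P) Q)

/-- ℓ-terms: `P^ℓ ::= (a ∧❛ P^T) ∨❛ P^F | (¬a ∧❛ P^T) ∨❛ P^F`. -/
inductive IsLTerm {A : Type} : STerm A → Prop
  | pos (a : A) {P Q} : IsTTerm P → IsFTerm Q → IsLTerm (.or (.and (.atom a) P) Q)
  | neg (a : A) {P Q} : IsTTerm P → IsFTerm Q → IsLTerm (.or (.and (.neg (.atom a)) P) Q)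

mutual
/-- The category `P^c ::= P^ℓ | P^* ∧❛ P^d`. -/
inductive IsCTerm {A : Type} : STerm A → Prop
  | ell {P} : IsLTerm P → IsCTerm P
  | and {P Q} : IsStarTerm P → IsDTerm Q → IsCTerm (.and P Q)

/-- The category `P^d ::= P^ℓ | P^* ∨❛ P^c`. -/
inductive IsDTerm {A : Type} : STerm A → Prop
  | ell {P} : IsLTerm P → IsDTerm P
  | or {P Q} : IsStarTerm P → IsCTerm Q → IsDTerm (.or P Q)

/-- *-terms: `P^* ::= P^c | P^d`. -/
inductive IsStarTerm {A : Type} : STerm A → Prop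
  | c {P} : IsCTerm P → IsStarTerm P
  | d {P} : IsDTerm P → IsStarTerm P
end

/-- Binary trees over `A` with leaves in `{T, F, △}`. -/
inductive DTree (A : Type) : Type
  | leafT : DTree A
  | leafF : DTree A
  | leafD : DTree A
  | node : DTree A → A → DTree A → DTree A

namespace DTree

/-- `X[△↦Z]`: replace every `△`-leaf of `X` by the evaluation tree `Z`. -/
def substD {A : Type} : DTree A → ETree A → ETree A
  | leafT, _ => .leafT
  | leafF, _ => .leafF
  | leafD, z => z
  | node l a r, z => .node (substD l z) a (substD r z)

/-- The tree contains the leaf `T`. -/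
def hasT {A : Type} : DTree A → Prop
  | leafT => True
  | leafF => False
  | leafD => False
  | node l _ r => hasT l ∨ hasT r

/-- The tree contains the leaf `F`. -/
def hasF {A : Type} : DTree A → Prop
  | leafT => False
  | leafF => True
  | leafD => False
  | node l _ r => hasF l ∨ hasF r

/-- The tree contains the leaf `△`. -/
def hasD {A : Type} : DTree A → Prop
  | leafT => False
  | leafF => False
  | leafD => True
  | node l _ r => hasD l ∨ hasD r

end DTree

/-- `RightmostL P R`: `R` is the rightmost ℓ-term of the *-term `P`. -/
inductive RightmostL {A : Type} : STerm A → STerm A → Prop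
  | ell {P} : IsLTerm P → RightmostL P P
  | and {P Q R} : IsStarTerm P → RightmostL Q R → RightmostL (.and P Q) R
  | or {P Q R} : IsStarTerm P → RightmostL Q R → RightmostL (.or P Q) R

section Aux

variable {A : Type}

lemma repl_hasT1 : ∀ (E Y Z : ETree A), E.hasT → Y.hasT → (E.repl Y Z).hasT
  | .leafT, _, _, _, hY => hY
  | .leafF, _, _, h, _ => h.elim
  | .node l a r, Y, Z, h, hY => h.imp (fun hl => repl_hasT1 l Y Z hl hY)
      (fun hr => repl_hasT1 r Y Z hr hY)

lemma repl_hasT2 : ∀ (E Y Z : ETree A), E.hasF → Z.hasT → (E.repl Y Z).hasT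
  | .leafT, _, _, h, _ => h.elim
  | .leafF, _, _, _, hZ => hZ
  | .node l a r, Y, Z, h, hZ => h.imp (fun hl => repl_hasT2 l Y Z hl hZ)
      (fun hr => repl_hasT2 r Y Z hr hZ)

lemma repl_hasF1 : ∀ (E Y Z : ETree A), E.hasT → Y.hasF → (E.repl Y Z).hasF
  | .leafT, _, _, _, hY => hY
  | .leafF, _, _, h, _ => h.elim
  | .node l a r, Y, Z, h, hY => h.imp (fun hl => repl_hasF1 l Y Z hl hY)
      (fun hr => repl_hasF1 r Y Z hr hY)

lemma repl_hasF2 : ∀ (E Y Z : ETree A), E.hasF → Z.hasF → (E.repl Y Z).hasF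
  | .leafT, _, _, h, _ => h.elim
  | .leafF, _, _, _, hZ => hZ
  | .node l a r, Y, Z, h, hZ => h.imp (fun hl => repl_hasF2 l Y Z hl hZ)
      (fun hr => repl_hasF2 r Y Z hr hZ)

lemma tterm_hasT {P : STerm A} (h : IsTTerm P) : (se P).hasT := by
  induction h with
  | tt => trivial
  | node a hP hQ ihP ihQ =>
    simp only [se, ETree.repl]
    exact Or.inr ihQ

lemma fterm_hasF {P : STerm A} (h : IsFTerm P) : (se P).hasF := by
  induction h with
  | ff => trivial
  | node a hP hQ ihP ihQ =>
    simp only [se, ETree.repl]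
    exact Or.inl ihQ

lemma lterm_hasTF {P : STerm A} (h : IsLTerm P) : (se P).hasT ∧ (se P).hasF := by
  cases h with
  | pos a hP hQ =>
    simp only [se, ETree.repl]
    exact ⟨Or.inl (repl_hasT1 _ _ _ (tterm_hasT hP) trivial), Or.inr (fterm_hasF hQ)⟩
  | neg a hP hQ =>
    simp only [se, ETree.repl]
    exact ⟨Or.inr (repl_hasT1 _ _ _ (tterm_hasT hP) trivial), Or.inl (fterm_hasF hQ)⟩

lemma cd_hasTF (P : STerm A) :
    (IsCTerm P → (se P).hasT ∧ (se P).hasF) ∧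
    (IsDTerm P → (se P).hasT ∧ (se P).hasF) := by
  induction P with
  | and P Q ihP ihQ =>
    constructor
    · intro h
      cases h with
      | ell hl => exact lterm_hasTF hl
      | and hP hQ =>
        have hPt : (se P).hasT ∧ (se P).hasF := by
          cases hP with
          | c h => exact ihP.1 h
          | d h => exact ihP.2 h
        have hQt := ihQ.2 hQ
        simp only [se]
        exact ⟨repl_hasT1 _ _ _ hPt.1 hQt.1, repl_hasF2 _ _ _ hPt.2 trivial⟩
    · intro h
      cases h with
      | ell hl => exact lterm_hasTF hl
  | or P Q ihP ihQ =>
    constructor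
    · intro h
      cases h with
      | ell hl => exact lterm_hasTF hl
    · intro h
      cases h with
      | ell hl => exact lterm_hasTF hl
      | or hP hQ =>
        have hPt : (se P).hasT ∧ (se P).hasF := by
          cases hP with
          | c h => exact ihP.1 h
          | d h => exact ihP.2 h
        have hQt := ihQ.1 hQ
        simp only [se]
        exact ⟨repl_hasT1 _ _ _ hPt.1 trivial, repl_hasF2 _ _ _ hPt.2 hQt.2⟩
  | atom a =>
    refine ⟨fun h => ?_, fun h => ?_⟩ <;>
    · cases h with
      | ell hl => cases hl
  | tt =>
    refine ⟨fun h => ?_, fun h => ?_⟩ <;>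
    · cases h with
      | ell hl => cases hl
  | ff =>
    refine ⟨fun h => ?_, fun h => ?_⟩ <;>
    · cases h with
      | ell hl => cases hl
  | neg P ih =>
    refine ⟨fun h => ?_, fun h => ?_⟩ <;>
    · cases h with
      | ell hl => cases hl

lemma star_hasTF {P : STerm A} (h : IsStarTerm P) : (se P).hasT ∧ (se P).hasF := by
  cases h with
  | c h => exact (cd_hasTF P).1 h
  | d h => exact (cd_hasTF P).2 h

/-- Embed an evaluation tree into a `DTree`, replacing `T`/`F` leaves by `DTree`s. -/
def replD : ETree A → DTree A → DTree A → DTree A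
  | .leafT, y, _ => y
  | .leafF, _, z => z
  | .node l a r, y, z => .node (replD l y z) a (replD r y z)

lemma substD_replD : ∀ (E : ETree A) (Y Z : DTree A) (W : ETree A),
    (replD E Y Z).substD W = E.repl (Y.substD W) (Z.substD W)
  | .leafT, _, _, _ => rfl
  | .leafF, _, _, _ => rfl
  | .node l a r, Y, Z, W => by
    simp only [replD, DTree.substD, ETree.repl, substD_replD l, substD_replD r]

lemma replD_hasD1 : ∀ (E : ETree A) (Y Z : DTree A), E.hasT → Y.hasD → (replD E Y Z).hasD
  | .leafT, _, _, _, hY => hY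
  | .leafF, _, _, h, _ => h.elim
  | .node l a r, Y, Z, h, hY => h.imp (fun hl => replD_hasD1 l Y Z hl hY)
      (fun hr => replD_hasD1 r Y Z hr hY)

lemma replD_hasD2 : ∀ (E : ETree A) (Y Z : DTree A), E.hasF → Z.hasD → (replD E Y Z).hasD
  | .leafT, _, _, h, _ => h.elim
  | .leafF, _, _, _, hZ => hZ
  | .node l a r, Y, Z, h, hZ => h.imp (fun hl => replD_hasD2 l Y Z hl hZ)
      (fun hr => replD_hasD2 r Y Z hr hZ)

/-- Goal of the witness decomposition. -/
def WDGoal (P : STerm A) : Prop :=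
  ∃ (X : DTree A) (R : STerm A), RightmostL P R ∧ X.hasD ∧ se P = X.substD (se R)

lemma wd_ell {P : STerm A} (h : IsLTerm P) : WDGoal P :=
  ⟨.leafD, P, .ell h, trivial, rfl⟩

lemma wd_cd (P : STerm A) : (IsCTerm P → WDGoal P) ∧ (IsDTerm P → WDGoal P) := by
  induction P with
  | and P Q ihP ihQ =>
    constructor
    · intro h
      cases h with
      | ell hl => exact wd_ell hl
      | and hP hQ =>
        obtain ⟨X, R, hR, hD, heq⟩ := ihQ.2 hQ
        refine ⟨replD (se P) X .leafF, R, .and hP hR, ?_, ?_⟩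
        · exact replD_hasD1 _ _ _ (star_hasTF hP).1 hD
        · simp only [se, substD_replD, heq, DTree.substD]
    · intro h
      cases h with
      | ell hl => exact wd_ell hl
  | or P Q ihP ihQ =>
    constructor
    · intro h
      cases h with
      | ell hl => exact wd_ell hl
    · intro h
      cases h with
      | ell hl => exact wd_ell hl
      | or hP hQ =>
        obtain ⟨X, R, hR, hD, heq⟩ := ihQ.1 hQ
        refine ⟨replD (se P) .leafT X, R, .or hP hR, ?_, ?_⟩
        · exact replD_hasD2 _ _ _ (star_hasTF hP).2 hD
        · simp only [se, substD_replD, heq, DTree.substD]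
    all_goals skip
  | atom a =>
    refine ⟨fun h => ?_, fun h => ?_⟩ <;>
    · cases h with
      | ell hl => cases hl
  | tt =>
    refine ⟨fun h => ?_, fun h => ?_⟩ <;>
    · cases h with
      | ell hl => cases hl
  | ff =>
    refine ⟨fun h => ?_, fun h => ?_⟩ <;>
    · cases h with
      | ell hl => cases hl
  | neg P ih =>
    refine ⟨fun h => ?_, fun h => ?_⟩ <;>
    · cases h with
      | ell hl => cases hl

end Aux

/-- Witness decomposition: for every *-term `P`, `se(P)` decomposes as `X[△↦Y]` where `X`
contains `△` and `Y = se(R)` for the rightmost ℓ-term `R` of `P`. -/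
theorem witness_decomposition {A : Type} [Nonempty A] (P : STerm A) (hP : IsStarTerm P) :
    ∃ (X : DTree A) (R : STerm A),
      RightmostL P R ∧ X.hasD ∧ se P = X.substD (se R) := by
  cases hP with
  | c h => exact (wd_cd P).1 h
  | d h => exact (wd_cd P).2 h
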